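/- Assume ‖ν(z)‖ = 1 for all z ∈ Γ, the Lipschitz hypothesis (Lip) with constant ℓ_ν > 0, the flatness hypothesis (Flat) with constant c_ν > 0, and the boundedness hypothesis (Bdd) with constant d > 0. Set c_p := (1 + 12 c_ν² d²)/(4π). Then for all indices i, j ∈ {1,2,3} and all x, y ∈ Γ with x ≠ y, |p(x,y) · q_{ij}(x,y)| ≤ 2 c_p ℓ_ν / ‖x − y‖². -/

import Mathlib

open scoped RealInnerProductSpace

/-- The second mixed normal derivative of the Laplace fundamental solution:
`p(x,y) = (ν(x)·ν(y))/(4π‖x−y‖³) − 3(ν(y)·(x−y))(ν(x)·(x−y))/(4π‖x−y‖⁵)`. -/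
noncomputable def laplaceHyperKernel
    (ν : EuclideanSpace ℝ (Fin 3) → EuclideanSpace ℝ (Fin 3))
    (x y : EuclideanSpace ℝ (Fin 3)) : ℝ :=
  ⟪ν x, ν y⟫ / (4 * Real.pi * ‖x - y‖ ^ 3)
    - 3 * (⟪ν y, x - y⟫ * ⟪ν x, x - y⟫) / (4 * Real.pi * ‖x - y‖ ^ 5)

/-- The kernel factor `q_{ij}(x,y) = ν_i(x)ν_j(x) − ν_i(y)ν_j(y)`. -/
def normalProductKernel
    (ν : EuclideanSpace ℝ (Fin 3) → EuclideanSpace ℝ (Fin 3))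
    (i j : Fin 3) (x y : EuclideanSpace ℝ (Fin 3)) : ℝ :=
  ν x i * ν x j - ν y i * ν y j

lemma coord_abs_le_norm (v : EuclideanSpace ℝ (Fin 3)) (k : Fin 3) : |v k| ≤ ‖v‖ := by
  have h1 : v k = ⟪EuclideanSpace.single k (1:ℝ), v⟫ := by
    rw [EuclideanSpace.inner_single_left]; simp
  rw [h1]
  calc |⟪EuclideanSpace.single k (1:ℝ), v⟫| ≤ ‖EuclideanSpace.single k (1:ℝ)‖ * ‖v‖ :=
        abs_real_inner_le_norm _ _
    _ = ‖v‖ := by simp [EuclideanSpace.norm_single]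

theorem kernel_pq_bound
    (Γ : Set (EuclideanSpace ℝ (Fin 3)))
    (ν : EuclideanSpace ℝ (Fin 3) → EuclideanSpace ℝ (Fin 3))
    (hν : ∀ z ∈ Γ, ‖ν z‖ = 1)
    (ℓ_ν : ℝ) (hℓ : 0 < ℓ_ν)
    (hLip : ∀ x ∈ Γ, ∀ y ∈ Γ, ‖ν x - ν y‖ ≤ ℓ_ν * ‖x - y‖)
    (c_ν : ℝ) (hc : 0 < c_ν)
    (hFlat : ∀ x ∈ Γ, ∀ y ∈ Γ,
      |⟪ν x, x - y⟫| ≤ c_ν * ‖x - y‖ ^ 2 ∧ |⟪ν y, x - y⟫| ≤ c_ν * ‖x - y‖ ^ 2)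
    (d : ℝ) (hd : 0 < d)
    (hBdd : ∀ z ∈ Γ, ‖z‖ ≤ d)
    (i j : Fin 3)
    (x y : EuclideanSpace ℝ (Fin 3)) (hx : x ∈ Γ) (hy : y ∈ Γ) (hxy : x ≠ y) :
    |laplaceHyperKernel ν x y * normalProductKernel ν i j x y|
      ≤ 2 * ((1 + 12 * c_ν ^ 2 * d ^ 2) / (4 * Real.pi)) * ℓ_ν / ‖x - y‖ ^ 2 := by
  have hπ := Real.pi_pos
  have hr : (0:ℝ) < ‖x - y‖ := by
    rw [norm_pos_iff]; exact sub_ne_zero.mpr hxy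
  set r := ‖x - y‖ with hrdef
  have hr2d : r ≤ 2 * d := by
    calc r ≤ ‖x‖ + ‖y‖ := norm_sub_le x y
      _ ≤ d + d := add_le_add (hBdd x hx) (hBdd y hy)
      _ = 2 * d := by ring
  -- q bound
  have hcoordx : ∀ k : Fin 3, |ν x k| ≤ 1 := fun k => (coord_abs_le_norm (ν x) k).trans_eq (hν x hx)
  have hcoordy : ∀ k : Fin 3, |ν y k| ≤ 1 := fun k => (coord_abs_le_norm (ν y) k).trans_eq (hν y hy)
  have hdiff : ∀ k : Fin 3, |ν x k - ν y k| ≤ ℓ_ν * r :=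
    fun k => (coord_abs_le_norm (ν x - ν y) k).trans (hLip x hx y hy)
  have hq : |normalProductKernel ν i j x y| ≤ 2 * ℓ_ν * r := by
    have heq : normalProductKernel ν i j x y
        = ν x i * (ν x j - ν y j) + (ν x i - ν y i) * ν y j := by
      rw [normalProductKernel]; ring
    rw [heq]
    calc |ν x i * (ν x j - ν y j) + (ν x i - ν y i) * ν y j|
        ≤ |ν x i * (ν x j - ν y j)| + |(ν x i - ν y i) * ν y j| := abs_add_le _ _
      _ = |ν x i| * |ν x j - ν y j| + |ν x i - ν y i| * |ν y j| := by rw [abs_mul, abs_mul]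
      _ ≤ 1 * (ℓ_ν * r) + (ℓ_ν * r) * 1 := by
          gcongr
          · exact hcoordx i
          · exact hdiff j
          · exact hdiff i
          · exact hcoordy j
      _ = 2 * ℓ_ν * r := by ring
  -- p bound
  have hA : |⟪ν x, ν y⟫| ≤ 1 := by
    calc |⟪ν x, ν y⟫| ≤ ‖ν x‖ * ‖ν y‖ := abs_real_inner_le_norm _ _
      _ = 1 := by rw [hν x hx, hν y hy]; ring
  obtain ⟨hC, hB⟩ := hFlat x hx y hy
  have hd3 : (0:ℝ) < 4 * Real.pi * r ^ 3 := by positivity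
  have hd5 : (0:ℝ) < 4 * Real.pi * r ^ 5 := by positivity
  have hp : |laplaceHyperKernel ν x y| ≤ (1 + 12 * c_ν ^ 2 * d ^ 2) / (4 * Real.pi * r ^ 3) := by
    rw [laplaceHyperKernel]
    have h1 : |⟪ν x, ν y⟫ / (4 * Real.pi * r ^ 3)| ≤ 1 / (4 * Real.pi * r ^ 3) := by
      rw [abs_div, abs_of_pos hd3]
      gcongr
    have h2 : |3 * (⟪ν y, x - y⟫ * ⟪ν x, x - y⟫) / (4 * Real.pi * r ^ 5)|
        ≤ 3 * ((c_ν * r ^ 2) * (c_ν * r ^ 2)) / (4 * Real.pi * r ^ 5) := by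
      rw [abs_div, abs_of_pos hd5]
      gcongr ?_ / _
      calc |3 * (⟪ν y, x - y⟫ * ⟪ν x, x - y⟫)| = 3 * (|⟪ν y, x - y⟫| * |⟪ν x, x - y⟫|) := by
            rw [abs_mul, abs_mul]; norm_num
        _ ≤ 3 * ((c_ν * r ^ 2) * (c_ν * r ^ 2)) := by
            have := mul_le_mul hB hC (abs_nonneg _) (by positivity)
            linarith
    have h3 : 3 * ((c_ν * r ^ 2) * (c_ν * r ^ 2)) / (4 * Real.pi * r ^ 5)
        = (3 * c_ν ^ 2 * r ^ 2) / (4 * Real.pi * r ^ 3) := by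
      field_simp
    have hr2 : r ^ 2 ≤ (2 * d) ^ 2 := by nlinarith
    have h4 : 3 * c_ν ^ 2 * r ^ 2 ≤ 12 * c_ν ^ 2 * d ^ 2 := by nlinarith [sq_nonneg c_ν]
    calc |⟪ν x, ν y⟫ / (4 * Real.pi * r ^ 3)
          - 3 * (⟪ν y, x - y⟫ * ⟪ν x, x - y⟫) / (4 * Real.pi * r ^ 5)|
        ≤ |⟪ν x, ν y⟫ / (4 * Real.pi * r ^ 3)|
          + |3 * (⟪ν y, x - y⟫ * ⟪ν x, x - y⟫) / (4 * Real.pi * r ^ 5)| := abs_sub _ _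
      _ ≤ 1 / (4 * Real.pi * r ^ 3) + (3 * c_ν ^ 2 * r ^ 2) / (4 * Real.pi * r ^ 3) := by
          rw [← h3]; exact add_le_add h1 h2
      _ = (1 + 3 * c_ν ^ 2 * r ^ 2) / (4 * Real.pi * r ^ 3) := by rw [← add_div]
      _ ≤ (1 + 12 * c_ν ^ 2 * d ^ 2) / (4 * Real.pi * r ^ 3) := by gcongr
  -- combine
  have hbnd : (0:ℝ) ≤ (1 + 12 * c_ν ^ 2 * d ^ 2) / (4 * Real.pi * r ^ 3) := by positivity
  calc |laplaceHyperKernel ν x y * normalProductKernel ν i j x y|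
      = |laplaceHyperKernel ν x y| * |normalProductKernel ν i j x y| := abs_mul _ _
    _ ≤ ((1 + 12 * c_ν ^ 2 * d ^ 2) / (4 * Real.pi * r ^ 3)) * (2 * ℓ_ν * r) :=
        mul_le_mul hp hq (abs_nonneg _) hbnd
    _ = 2 * ((1 + 12 * c_ν ^ 2 * d ^ 2) / (4 * Real.pi)) * ℓ_ν / r ^ 2 := by
        field_simp
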